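/- Let (Q,*) be a countable weak-latin quandle with a right order <. Then there exist a strictly increasing map ι : Q → ℝ (q < q' implies ι(q) < ι(q')) and a map ψ from Q to the group of order-preserving bijections of ℝ (equivalently, orientation-preserving homeomorphisms of ℝ) such that: (1) ψ is injective; (2) ψ(q*r) = ψ(r) ∘ ψ(q) ∘ ψ(r)⁻¹ for all q,r ∈ Q (where (f ∘ g)(x) = f(g(x))), i.e., ψ is a quandle anti-homomorphism into the conjugation quandle of Homeo₊(ℝ); and (3) ψ(q)(ι(q')) = ι(q'*q) for all q,q' ∈ Q. In particular, every countable weak-latin right orderable quandle acts faithfully on the real line. -/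

import Mathlib

/-! Auxiliary machinery: canonical extension of an order automorphism of `ℚ`
to an order automorphism of `ℝ`, plus lexicographic product tools. -/

namespace DynRealAux

/-- The canonical extension of `f : ℚ ≃o ℚ` to a map `ℝ → ℝ`. -/
noncomputable def ext (f : ℚ ≃o ℚ) (x : ℝ) : ℝ :=
  sSup ((fun t : ℚ => ((f t : ℚ) : ℝ)) '' {t : ℚ | (t : ℝ) ≤ x})

lemma ext_set_nonempty (f : ℚ ≃o ℚ) (x : ℝ) :
    ((fun t : ℚ => ((f t : ℚ) : ℝ)) '' {t : ℚ | (t : ℝ) ≤ x}).Nonempty := by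
  obtain ⟨t, ht⟩ := exists_rat_lt x
  exact ⟨_, ⟨t, le_of_lt ht, rfl⟩⟩

lemma ext_set_bddAbove (f : ℚ ≃o ℚ) (x : ℝ) :
    BddAbove ((fun t : ℚ => ((f t : ℚ) : ℝ)) '' {t : ℚ | (t : ℝ) ≤ x}) := by
  obtain ⟨u, hu⟩ := exists_rat_gt x
  refine ⟨((f u : ℚ) : ℝ), ?_⟩
  rintro y ⟨t, ht, rfl⟩
  have htu : t ≤ u := by
    have : (t : ℝ) ≤ (u : ℝ) := le_trans ht (le_of_lt hu)
    exact_mod_cast this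
  show ((f t : ℚ) : ℝ) ≤ ((f u : ℚ) : ℝ)
  exact_mod_cast f.monotone htu

lemma ext_rat (f : ℚ ≃o ℚ) (t : ℚ) : ext f (t : ℝ) = ((f t : ℚ) : ℝ) := by
  apply IsGreatest.csSup_eq
  constructor
  · exact ⟨t, show (t:ℝ) ≤ (t:ℝ) from le_rfl, rfl⟩
  · rintro y ⟨s, hs, rfl⟩
    have hst : s ≤ t := by exact_mod_cast hs
    show ((f s : ℚ) : ℝ) ≤ ((f t : ℚ) : ℝ)
    exact_mod_cast f.monotone hst

lemma ext_mono (f : ℚ ≃o ℚ) : Monotone (ext f) := by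
  intro a b hab
  apply csSup_le_csSup (ext_set_bddAbove f b) (ext_set_nonempty f a)
  rintro y ⟨t, ht, rfl⟩
  exact ⟨t, le_trans ht hab, rfl⟩

lemma ext_congr {f g : ℚ ≃o ℚ} (h : ∀ t, f t = g t) (x : ℝ) : ext f x = ext g x := by
  unfold ext
  congr 1
  apply Set.image_congr
  intro t _
  rw [h t]

lemma ext_id (x : ℝ) : ext (OrderIso.refl ℚ) x = x := by
  apply le_antisymm
  · apply csSup_le (ext_set_nonempty _ x)
    rintro y ⟨t, ht, rfl⟩
    exact ht
  · apply le_of_forall_lt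
    intro w hw
    obtain ⟨t, hwt, htx⟩ := exists_rat_btwn hw
    calc w < (t : ℝ) := hwt
    _ ≤ _ := le_csSup (ext_set_bddAbove _ x) ⟨t, le_of_lt htx, rfl⟩

lemma ext_comp (f g : ℚ ≃o ℚ) (x : ℝ) : ext f (ext g x) = ext (g.trans f) x := by
  set y := ext g x with hy
  apply le_antisymm
  · apply csSup_le (ext_set_nonempty f y)
    rintro z ⟨t, ht, rfl⟩
    -- `(t : ℝ) ≤ y`; show `(f t : ℝ) ≤ sSup {f (g s) | (s : ℝ) ≤ x}`
    apply le_of_forall_lt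
    intro w hw
    obtain ⟨v, hwv, hvft⟩ := exists_rat_btwn hw
    have hvft' : v < f t := by
      have : (v:ℝ) < ((f t : ℚ):ℝ) := hvft
      exact_mod_cast this
    have hv : f.symm v < t := by
      have : f.symm v < f.symm (f t) := f.symm.strictMono hvft'
      simpa using this
    have hvy : ((f.symm v : ℚ) : ℝ) < y := lt_of_lt_of_le (by exact_mod_cast hv) ht
    rw [hy] at hvy
    obtain ⟨z, hz, hvz⟩ := exists_lt_of_lt_csSup (ext_set_nonempty g x) hvy
    obtain ⟨s, hs, rfl⟩ := hz
    have h1 : f.symm v < g s := by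
      have : ((f.symm v : ℚ):ℝ) < ((g s : ℚ):ℝ) := hvz
      exact_mod_cast this
    have h2 : v < f (g s) := by
      have := f.strictMono h1
      simpa using this
    calc w < (v : ℝ) := hwv
    _ ≤ ((f (g s) : ℚ) : ℝ) := by exact_mod_cast le_of_lt h2
    _ ≤ _ := le_csSup (ext_set_bddAbove (g.trans f) x) ⟨s, hs, rfl⟩
  · apply csSup_le (ext_set_nonempty _ x)
    rintro z ⟨s, hs, rfl⟩
    have hgs : ((g s : ℚ) : ℝ) ≤ y :=
      le_csSup (ext_set_bddAbove g x) ⟨s, hs, rfl⟩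
    exact le_csSup (ext_set_bddAbove f y) ⟨g s, hgs, rfl⟩

/-- The canonical extension of an order automorphism of `ℚ` to `ℝ`. -/
noncomputable def extIso (f : ℚ ≃o ℚ) : ℝ ≃o ℝ where
  toFun := ext f
  invFun := ext f.symm
  left_inv := by
    intro x
    rw [ext_comp, ext_congr (g := OrderIso.refl ℚ) (fun t => by simp), ext_id]
  right_inv := by
    intro x
    rw [ext_comp, ext_congr (g := OrderIso.refl ℚ) (fun t => by simp), ext_id]
  map_rel_iff' := by
    intro a b
    show ext f a ≤ ext f b ↔ a ≤ b
    constructor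
    · intro h
      have := ext_mono f.symm h
      rwa [ext_comp, ext_congr (g := OrderIso.refl ℚ) (fun t => by simp), ext_id,
        ext_comp, ext_congr (g := OrderIso.refl ℚ) (fun t => by simp), ext_id] at this
    · exact fun h => ext_mono f h

lemma extIso_apply (f : ℚ ≃o ℚ) (x : ℝ) : extIso f x = ext f x := rfl

lemma extIso_symm_apply (f : ℚ ≃o ℚ) (x : ℝ) : (extIso f).symm x = ext f.symm x := rfl

/-- Lift an order automorphism of `Q` to one of `Q ×ₗ ℚ` acting on the first factor. -/
def lexIso {Q : Type*} [LinearOrder Q] (g : Q ≃o Q) : (Q ×ₗ ℚ) ≃o (Q ×ₗ ℚ) where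
  toFun p := toLex (g (ofLex p).1, (ofLex p).2)
  invFun p := toLex (g.symm (ofLex p).1, (ofLex p).2)
  left_inv p := by simp
  right_inv p := by simp
  map_rel_iff' := by
    intro a b
    show toLex (g (ofLex a).1, (ofLex a).2) ≤ toLex (g (ofLex b).1, (ofLex b).2) ↔ a ≤ b
    have hab : a ≤ b ↔ (ofLex a).1 < (ofLex b).1 ∨ (ofLex a).1 = (ofLex b).1 ∧ (ofLex a).2 ≤ (ofLex b).2 :=
      Prod.Lex.le_iff
    rw [Prod.Lex.le_iff, hab]
    simp only [ofLex_toLex]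
    constructor
    · rintro (h | ⟨h1, h2⟩)
      · exact Or.inl (g.lt_iff_lt.mp h)
      · exact Or.inr ⟨g.injective h1, h2⟩
    · rintro (h | ⟨h1, h2⟩)
      · exact Or.inl (g.strictMono h)
      · exact Or.inr ⟨congrArg g h1, h2⟩

end DynRealAux

open DynRealAux in
/-- Dynamical realization of a right order on a countable
weak-latin quandle: there are a strictly increasing embedding `ι : Q → ℝ` and a
faithful quandle action `ψ` of `Q` by order-preserving bijections
(equivalently, orientation-preserving homeomorphisms) of `ℝ`, i.e. `ψ` is an
injective quandle anti-homomorphism into `Conj(Homeo₊(ℝ))` realizing the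
natural action `ψ(q)(ι(q')) = ι(q' * q)` on the embedded copy of `Q`. -/
theorem dynamical_realization_line
    {Q : Type*} [Countable Q] (op : Q → Q → Q)
    (hQ1 : ∀ q : Q, op q q = q)
    (hQ2 : ∀ q r : Q, ∃! s : Q, op s r = q)
    (hQ3 : ∀ q r s : Q, op (op q r) s = op (op q s) (op r s))
    (hwl : ∀ q r : Q, ∃ qhat : Q, (op qhat q = op qhat r → q = r))
    (lt : Q → Q → Prop) (hlt : IsStrictTotalOrder Q lt)
    (hinv : ∀ q q1 q2 : Q, lt q1 q2 → lt (op q1 q) (op q2 q)) :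
    ∃ (ι : Q → ℝ) (ψ : Q → (ℝ ≃o ℝ)),
      -- ι is strictly increasing
      (∀ q q' : Q, lt q q' → ι q < ι q') ∧
      -- (1) the action is faithful
      Function.Injective ψ ∧
      -- (2) ψ is a quandle anti-homomorphism into Conj(Homeo₊(ℝ)):
      --     ψ(q*r) = ψ(r) ∘ ψ(q) ∘ ψ(r)⁻¹
      (∀ q r : Q, ∀ x : ℝ, ψ (op q r) x = ψ r (ψ q ((ψ r).symm x))) ∧
      -- (3) the action realizes the quandle operation on ι(Q)
      (∀ q q' : Q, ψ q (ι q') = ι (op q' q)) := by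
  classical
  -- Handle the empty case first
  rcases isEmpty_or_nonempty Q with hE | hNE
  · exact ⟨fun q => isEmptyElim q, fun q => isEmptyElim q,
      fun q => isEmptyElim q, fun q => isEmptyElim q,
      fun q => isEmptyElim q, fun q => isEmptyElim q⟩
  -- Put the linear order structure on Q
  letI : LinearOrder Q := linearOrderOfSTO lt
  have hlt_iff : ∀ a b : Q, a < b ↔ lt a b := fun a b => Iff.rfl
  -- Right translations as order automorphisms of Q
  have hbij : ∀ q : Q, Function.Bijective (fun s => op s q) := by
    intro q
    constructor
    · intro a b hab
      rcases hQ2 (op a q) q with ⟨s, -, hs⟩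
      exact (hs a rfl).trans (hs b hab.symm).symm
    · intro a
      rcases hQ2 a q with ⟨s, hs, _⟩
      exact ⟨s, hs⟩
  have hsm : ∀ q : Q, StrictMono (fun s => op s q) := fun q a b hab => hinv q a b hab
  let σ : Q → Q ≃o Q := fun q => StrictMono.orderIsoOfSurjective _ (hsm q) (hbij q).2
  have σ_apply : ∀ q s, σ q s = op s q := fun q s => rfl
  have σ_symm : ∀ q s, op ((σ q).symm s) q = s := fun q s => (σ q).apply_symm_apply s
  -- The lexicographic product and its order isomorphism with ℚ
  haveI : Countable (Q ×ₗ ℚ) := inferInstanceAs (Countable (Q × ℚ))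
  haveI : Nonempty (Q ×ₗ ℚ) := inferInstanceAs (Nonempty (Q × ℚ))
  haveI : DenselyOrdered (Q ×ₗ ℚ) := by
    constructor
    intro a b hab
    rw [show a = toLex (ofLex a) from rfl, show b = toLex (ofLex b) from rfl,
      Prod.Lex.lt_iff] at hab
    rcases hab with h | ⟨h1, h2⟩
    · refine ⟨toLex ((ofLex a).1, (ofLex a).2 + 1), ?_, ?_⟩
      · rw [show a = toLex (ofLex a) from rfl, Prod.Lex.lt_iff]
        exact Or.inr ⟨rfl, by simp⟩
      · rw [show b = toLex (ofLex b) from rfl, Prod.Lex.lt_iff]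
        exact Or.inl h
    · obtain ⟨c, hc1, hc2⟩ := exists_between h2
      refine ⟨toLex ((ofLex a).1, c), ?_, ?_⟩
      · rw [show a = toLex (ofLex a) from rfl, Prod.Lex.lt_iff]
        exact Or.inr ⟨rfl, hc1⟩
      · rw [show b = toLex (ofLex b) from rfl, Prod.Lex.lt_iff]
        exact Or.inr ⟨h1, hc2⟩
  obtain ⟨e⟩ : Nonempty ((Q ×ₗ ℚ) ≃o ℚ) := Order.iso_of_countable_dense (Q ×ₗ ℚ) ℚ
  -- Definitions of ι and ψ
  set ι : Q → ℝ := fun q => ((e (toLex (q, 0)) : ℚ) : ℝ) with hι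
  set τ : Q → ℚ ≃o ℚ := fun q => (e.symm.trans (lexIso (σ q))).trans e with hτ
  set ψ : Q → ℝ ≃o ℝ := fun q => extIso (τ q) with hψ
  have τ_apply : ∀ q t, τ q t = e (lexIso (σ q) (e.symm t)) := fun q t => rfl
  -- ι is strictly increasing
  have hι_mono : ∀ q q' : Q, lt q q' → ι q < ι q' := by
    intro q q' h
    have h1 : toLex ((q : Q), (0 : ℚ)) < toLex (q', (0 : ℚ)) :=
      Prod.Lex.lt_iff.mpr (Or.inl h)
    have h2 : e (toLex (q, (0:ℚ))) < e (toLex (q', (0:ℚ))) := e.strictMono h1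
    show ((e (toLex (q, (0:ℚ))) : ℚ) : ℝ) < ((e (toLex (q', (0:ℚ))) : ℚ) : ℝ)
    exact_mod_cast h2
  have hι_inj : Function.Injective ι := by
    intro a b hab
    rcases lt_trichotomy a b with h | h | h
    · exact absurd hab (ne_of_lt (hι_mono a b h))
    · exact h
    · exact absurd hab.symm (ne_of_lt (hι_mono b a h))
  -- Property (3)
  have h3 : ∀ q q' : Q, ψ q (ι q') = ι (op q' q) := by
    intro q q'
    show extIso (τ q) ((e (toLex (q', (0:ℚ))) : ℚ) : ℝ) = _
    rw [extIso_apply, ext_rat, τ_apply]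
    simp only [OrderIso.symm_apply_apply]
    congr 2
  -- Property (2)
  have h2 : ∀ q r : Q, ∀ x : ℝ, ψ (op q r) x = ψ r (ψ q ((ψ r).symm x)) := by
    intro q r x
    show extIso (τ (op q r)) x = extIso (τ r) (extIso (τ q) ((extIso (τ r)).symm x))
    simp only [extIso_symm_apply, extIso_apply]
    rw [ext_comp, ext_comp]
    apply ext_congr
    intro t
    -- must show: τ (op q r) t = τ r (τ q ((τ r).symm t))
    show τ (op q r) t = (((τ r).symm.trans (τ q)).trans (τ r)) t
    simp only [OrderIso.trans_apply, τ_apply, hτ, OrderIso.symm_trans_apply,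
      OrderIso.symm_apply_apply, OrderIso.apply_symm_apply]
    congr 1
    -- now an identity in Q ×ₗ ℚ
    set p : Q ×ₗ ℚ := e.symm t
    show lexIso (σ (op q r)) p = lexIso (σ r) (lexIso (σ q) ((lexIso (σ r)).symm p))
    have hfst : ∀ (g : Q ≃o Q) (w : Q ×ₗ ℚ),
        lexIso g w = toLex (g (ofLex w).1, (ofLex w).2) := fun _ _ => rfl
    have hsymm : ∀ (g : Q ≃o Q) (w : Q ×ₗ ℚ),
        (lexIso g).symm w = toLex (g.symm (ofLex w).1, (ofLex w).2) := fun _ _ => rfl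
    rw [hfst, hfst, hfst, hsymm]
    simp only [ofLex_toLex]
    congr 1
    refine Prod.ext ?_ rfl
    simp only
    -- componentwise : σ (op q r) s = σ r (σ q ((σ r).symm s))
    set s := (ofLex p).1
    rw [σ_apply, σ_apply, σ_apply]
    have key : op (op ((σ r).symm s) q) r = op s (op q r) := by
      rw [hQ3, σ_symm]
    rw [key]
  -- Property (1): injectivity
  have h1 : Function.Injective ψ := by
    intro a b hab
    obtain ⟨qhat, hq⟩ := hwl a b
    apply hq
    apply hι_inj
    rw [← h3 a qhat, ← h3 b qhat, hab]
  exact ⟨ι, ψ, hι_mono, h1, h2, h3⟩
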